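/- Let G̃ : H_N ⊗ H_N → H_M ⊗ H_N and Ŵ on H_M ⊗ H_M be unitaries satisfying the mixed pentagon equation Ŵ₁₂ G̃₁₃ G̃₂₃ = G̃₂₃ G̃₁₂. Define Δ_P̂(x) := G̃*(1 ⊗ x)G̃ for x ∈ B(H_N) and Δ_N̂(y) := G̃*(1 ⊗ y)Ŵ for y ∈ B(H_M, H_N). Then the mixed coassociativity identities hold: (Δ_N̂ ⊗ ι)Δ_N̂ = (ι ⊗ Δ̂)Δ_N̂ on its domain and (Δ_P̂ ⊗ ι)Δ_P̂ = (ι ⊗ Δ_P̂)Δ_P̂, where Δ̂(m) = Ŵ*(1 ⊗ m)Ŵ; in particular Δ_P̂ is coassociative. -/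
import Mathlib


open TensorProduct

noncomputable section

variable {A B C D : Type*}
  [AddCommGroup A] [Module ℂ A] [AddCommGroup B] [Module ℂ B]
  [AddCommGroup C] [Module ℂ C] [AddCommGroup D] [Module ℂ D]

/-- Place an operator `f : A ⊗ B → C ⊗ D` on legs 1 and 2, bystander `E` on leg 3. -/
def leg12 (f : A ⊗[ℂ] B →ₗ[ℂ] C ⊗[ℂ] D) (E : Type*) [AddCommGroup E] [Module ℂ E] :
    A ⊗[ℂ] (B ⊗[ℂ] E) →ₗ[ℂ] C ⊗[ℂ] (D ⊗[ℂ] E) :=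
  (TensorProduct.assoc ℂ C D E).toLinearMap ∘ₗ
    (TensorProduct.map f LinearMap.id) ∘ₗ (TensorProduct.assoc ℂ A B E).symm.toLinearMap

/-- Place an operator `f : A ⊗ B → C ⊗ D` on legs 1 and 3, bystander `E` on leg 2. -/
def leg13 (f : A ⊗[ℂ] B →ₗ[ℂ] C ⊗[ℂ] D) (E : Type*) [AddCommGroup E] [Module ℂ E] :
    A ⊗[ℂ] (E ⊗[ℂ] B) →ₗ[ℂ] C ⊗[ℂ] (E ⊗[ℂ] D) :=
  (LinearMap.lTensor C (TensorProduct.comm ℂ D E).toLinearMap) ∘ₗ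
    leg12 f E ∘ₗ (LinearMap.lTensor A (TensorProduct.comm ℂ E B).toLinearMap)

section Helpers
variable {A' B' E F V W X Y Z : Type*}
  [AddCommGroup A'] [Module ℂ A'] [AddCommGroup B'] [Module ℂ B']
  [AddCommGroup E] [Module ℂ E] [AddCommGroup F] [Module ℂ F]
  [AddCommGroup V] [Module ℂ V] [AddCommGroup W] [Module ℂ W]
  [AddCommGroup X] [Module ℂ X] [AddCommGroup Y] [Module ℂ Y]
  [AddCommGroup Z] [Module ℂ Z]

lemma comm_mid {p : X →ₗ[ℂ] Y} {q : Z →ₗ[ℂ] X} {q' : W →ₗ[ℂ] Y} {p' : Z →ₗ[ℂ] W}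
    (h : p ∘ₗ q = q' ∘ₗ p') (r : V →ₗ[ℂ] Z) : p ∘ₗ (q ∘ₗ r) = q' ∘ₗ (p' ∘ₗ r) := by
  rw [← LinearMap.comp_assoc, h, LinearMap.comp_assoc]

lemma cancel_left {p : X →ₗ[ℂ] Y} {q : Y →ₗ[ℂ] X} (h : p ∘ₗ q = LinearMap.id)
    (r : V →ₗ[ℂ] Y) : p ∘ₗ (q ∘ₗ r) = r := by
  rw [← LinearMap.comp_assoc, h, LinearMap.id_comp]

lemma symm_comp_self' (e : X ≃ₗ[ℂ] Y) : (e.symm.toLinearMap) ∘ₗ e.toLinearMap = LinearMap.id := by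
  ext x; simp

lemma leg12_id : leg12 (LinearMap.id : A ⊗[ℂ] B →ₗ[ℂ] A ⊗[ℂ] B) E = LinearMap.id := by
  ext a b e; simp [leg12]

lemma leg13_id : leg13 (LinearMap.id : A ⊗[ℂ] B →ₗ[ℂ] A ⊗[ℂ] B) E = LinearMap.id := by
  ext a e b; simp [leg13, leg12]

lemma leg12_comp (f : C ⊗[ℂ] D →ₗ[ℂ] A' ⊗[ℂ] B') (g : A ⊗[ℂ] B →ₗ[ℂ] C ⊗[ℂ] D) :
    leg12 (f ∘ₗ g) E = leg12 f E ∘ₗ leg12 g E := by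
  unfold leg12
  simp only [LinearMap.comp_assoc]
  rw [cancel_left (symm_comp_self' (TensorProduct.assoc ℂ C D E)),
    show map (f ∘ₗ g) (LinearMap.id : E →ₗ[ℂ] E) = map f LinearMap.id ∘ₗ map g LinearMap.id by
      rw [← TensorProduct.map_comp, LinearMap.id_comp]]
  simp only [LinearMap.comp_assoc]

lemma lTensor_comm_comm :
    LinearMap.lTensor C (TensorProduct.comm ℂ E D).toLinearMap ∘ₗ
      LinearMap.lTensor C (TensorProduct.comm ℂ D E).toLinearMap = LinearMap.id := by
  rw [← LinearMap.lTensor_comp]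
  have : (TensorProduct.comm ℂ E D).toLinearMap ∘ₗ (TensorProduct.comm ℂ D E).toLinearMap
      = LinearMap.id := by ext d e; simp
  rw [this, LinearMap.lTensor_id]

lemma leg13_comp (f : C ⊗[ℂ] D →ₗ[ℂ] A' ⊗[ℂ] B') (g : A ⊗[ℂ] B →ₗ[ℂ] C ⊗[ℂ] D) :
    leg13 (f ∘ₗ g) E = leg13 f E ∘ₗ leg13 g E := by
  unfold leg13
  rw [leg12_comp]
  simp only [LinearMap.comp_assoc]
  rw [cancel_left (lTensor_comm_comm (C:=C) (D:=D) (E:=E)) _]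

end Helpers

section Helpers2
variable {A' B' E F V : Type*}
  [AddCommGroup A'] [Module ℂ A'] [AddCommGroup B'] [Module ℂ B']
  [AddCommGroup E] [Module ℂ E] [AddCommGroup F] [Module ℂ F]
  [AddCommGroup V] [Module ℂ V]

lemma lTensor_cancel {f : B →ₗ[ℂ] C} {g : C →ₗ[ℂ] B} (h : f ∘ₗ g = LinearMap.id) :
    LinearMap.lTensor A f ∘ₗ LinearMap.lTensor A g = LinearMap.id := by
  rw [← LinearMap.lTensor_comp, h, LinearMap.lTensor_id]

lemma leg12_cancel {f : C ⊗[ℂ] D →ₗ[ℂ] A ⊗[ℂ] B} {g : A ⊗[ℂ] B →ₗ[ℂ] C ⊗[ℂ] D}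
    (h : f ∘ₗ g = LinearMap.id) : leg12 f E ∘ₗ leg12 g E = LinearMap.id := by
  rw [← leg12_comp, h, leg12_id]

lemma leg13_cancel {f : C ⊗[ℂ] D →ₗ[ℂ] A ⊗[ℂ] B} {g : A ⊗[ℂ] B →ₗ[ℂ] C ⊗[ℂ] D}
    (h : f ∘ₗ g = LinearMap.id) : leg13 f E ∘ₗ leg13 g E = LinearMap.id := by
  rw [← leg13_comp, h, leg13_id]

lemma leg13_lTensor (y : B →ₗ[ℂ] B') :
    leg13 (LinearMap.lTensor A y) E = LinearMap.lTensor A (LinearMap.lTensor E y) := by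
  ext a e b; simp [leg13, leg12]

lemma assoc_symm_lTensor (y : E →ₗ[ℂ] F) :
    (TensorProduct.assoc ℂ A B F).symm.toLinearMap ∘ₗ
        LinearMap.lTensor A (LinearMap.lTensor B y)
      = LinearMap.lTensor (A ⊗[ℂ] B) y ∘ₗ (TensorProduct.assoc ℂ A B E).symm.toLinearMap := by
  ext a b e; simp

lemma lTensor_assoc (y : E →ₗ[ℂ] F) :
    LinearMap.lTensor C (LinearMap.lTensor D y) ∘ₗ (TensorProduct.assoc ℂ C D E).toLinearMap
      = (TensorProduct.assoc ℂ C D F).toLinearMap ∘ₗ LinearMap.lTensor (C ⊗[ℂ] D) y := by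
  ext c d e; simp

lemma map_lTensor_comm (f : A ⊗[ℂ] B →ₗ[ℂ] C ⊗[ℂ] D) (y : E →ₗ[ℂ] F) :
    TensorProduct.map f LinearMap.id ∘ₗ LinearMap.lTensor (A ⊗[ℂ] B) y
      = LinearMap.lTensor (C ⊗[ℂ] D) y ∘ₗ TensorProduct.map f LinearMap.id := by
  ext x e
  simp

lemma leg12_lTensor3_comm (f : A ⊗[ℂ] B →ₗ[ℂ] C ⊗[ℂ] D) (y : E →ₗ[ℂ] F) :
    leg12 f F ∘ₗ LinearMap.lTensor A (LinearMap.lTensor B y)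
      = LinearMap.lTensor C (LinearMap.lTensor D y) ∘ₗ leg12 f E := by
  unfold leg12
  simp only [LinearMap.comp_assoc]
  rw [assoc_symm_lTensor, comm_mid (map_lTensor_comm f y) _, ← LinearMap.comp_assoc,
    ← lTensor_assoc, LinearMap.comp_assoc]

end Helpers2

/-- Let `G̃ : H_N ⊗ H_N → H_M ⊗ H_N` and `Ŵ` (on `H_M ⊗ H_M`) be
unitaries with `Ŵ` satisfying the pentagon equation and `G̃` the mixed pentagon
equation `Ŵ₁₂ G̃₁₃ G̃₂₃ = G̃₂₃ G̃₁₂`.  With `Δ_P̂(x) := G̃*(1 ⊗ x)G̃` and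
`Δ_N̂(y) := G̃*(1 ⊗ y)Ŵ`, the mixed coassociativity identities hold
(applying the coproduct to either leg of `Δ_N̂(y)` resp. `Δ_P̂(x)` yields the same
operator); in particular `Δ_P̂` is coassociative. -/
theorem mixed_coassociativity {Hm Hn : Type*}
    [AddCommGroup Hm] [Module ℂ Hm] [AddCommGroup Hn] [Module ℂ Hn]
    (What Whatstar : Hm ⊗[ℂ] Hm →ₗ[ℂ] Hm ⊗[ℂ] Hm)
    (hW1 : What ∘ₗ Whatstar = LinearMap.id) (hW2 : Whatstar ∘ₗ What = LinearMap.id)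
    (hWpent : leg12 What Hm ∘ₗ leg13 What Hm ∘ₗ LinearMap.lTensor Hm What
      = LinearMap.lTensor Hm What ∘ₗ leg12 What Hm)
    (G : Hn ⊗[ℂ] Hn →ₗ[ℂ] Hm ⊗[ℂ] Hn) (Gstar : Hm ⊗[ℂ] Hn →ₗ[ℂ] Hn ⊗[ℂ] Hn)
    (hG1 : G ∘ₗ Gstar = LinearMap.id) (hG2 : Gstar ∘ₗ G = LinearMap.id)
    (hmixedpent : leg12 What Hn ∘ₗ leg13 G Hm ∘ₗ LinearMap.lTensor Hn G
      = LinearMap.lTensor Hm G ∘ₗ leg12 G Hn)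
    (ΔN : (Hm →ₗ[ℂ] Hn) → (Hm ⊗[ℂ] Hm →ₗ[ℂ] Hn ⊗[ℂ] Hn))
    (hΔN : ∀ y : Hm →ₗ[ℂ] Hn, ΔN y = Gstar ∘ₗ LinearMap.lTensor Hm y ∘ₗ What)
    (ΔP : (Hn →ₗ[ℂ] Hn) → (Hn ⊗[ℂ] Hn →ₗ[ℂ] Hn ⊗[ℂ] Hn))
    (hΔP : ∀ x : Hn →ₗ[ℂ] Hn, ΔP x = Gstar ∘ₗ LinearMap.lTensor Hm x ∘ₗ G) :
    -- coassociativity for the corner `Δ_N̂`: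
    (∀ y : Hm →ₗ[ℂ] Hn,
      leg12 Gstar Hn ∘ₗ LinearMap.lTensor Hm (ΔN y) ∘ₗ leg12 What Hm
        = LinearMap.lTensor Hn Gstar ∘ₗ leg13 (ΔN y) Hm ∘ₗ LinearMap.lTensor Hm What)
    -- coassociativity for `Δ_P̂`:
    ∧ (∀ x : Hn →ₗ[ℂ] Hn,
      leg12 Gstar Hn ∘ₗ LinearMap.lTensor Hm (ΔP x) ∘ₗ leg12 G Hn
        = LinearMap.lTensor Hn Gstar ∘ₗ leg13 (ΔP x) Hm ∘ₗ LinearMap.lTensor Hn G) := by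
  have hMX : (LinearMap.lTensor Hm G ∘ₗ leg12 G Hn) ∘ₗ
      (leg12 Gstar Hn ∘ₗ LinearMap.lTensor Hm Gstar) = LinearMap.id := by
    simp only [LinearMap.comp_assoc]
    rw [cancel_left (leg12_cancel hG1) _, lTensor_cancel hG1]
  have hYM : (LinearMap.lTensor Hn Gstar ∘ₗ (leg13 Gstar Hm ∘ₗ leg12 Whatstar Hn)) ∘ₗ
      (LinearMap.lTensor Hm G ∘ₗ leg12 G Hn) = LinearMap.id := by
    rw [← hmixedpent]
    simp only [LinearMap.comp_assoc]
    rw [cancel_left (leg12_cancel hW2) _, cancel_left (leg13_cancel hG2) _, lTensor_cancel hG2]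
  have hXY : leg12 Gstar Hn ∘ₗ LinearMap.lTensor Hm Gstar
      = LinearMap.lTensor Hn Gstar ∘ₗ (leg13 Gstar Hm ∘ₗ leg12 Whatstar Hn) := by
    conv_lhs => rw [← LinearMap.id_comp (leg12 Gstar Hn ∘ₗ LinearMap.lTensor Hm Gstar), ← hYM]
    simp only [LinearMap.comp_assoc]
    rw [cancel_left (leg12_cancel hG1) _, lTensor_cancel hG1, LinearMap.comp_id]
  constructor
  · intro y
    rw [hΔN y]
    simp only [LinearMap.lTensor_comp, leg13_comp, leg13_lTensor, LinearMap.comp_assoc]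
    rw [← LinearMap.comp_assoc _ (LinearMap.lTensor Hm Gstar) (leg12 Gstar Hn), hXY]
    simp only [LinearMap.comp_assoc]
    rw [comm_mid (leg12_lTensor3_comm Whatstar y) _, ← hWpent,
      cancel_left (leg12_cancel hW2) _]
  · intro x
    rw [hΔP x]
    simp only [LinearMap.lTensor_comp, leg13_comp, leg13_lTensor, LinearMap.comp_assoc]
    rw [← LinearMap.comp_assoc _ (LinearMap.lTensor Hm Gstar) (leg12 Gstar Hn), hXY]
    simp only [LinearMap.comp_assoc]
    rw [comm_mid (leg12_lTensor3_comm Whatstar x) _, ← hmixedpent,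
      cancel_left (leg12_cancel hW2) _]

end
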